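/- Let k, t be positive integers with t ≤ k. For a t-element subset A of ZMod k, the least period r of A under the shift map satisfies: r divides k and k divides t·r. In particular, k/gcd(k,t) divides r. -/
import Mathlib


/-- The shift map on finsets of `ZMod m`. -/
def sh (m : ℕ) (A : Finset (ZMod m)) : Finset (ZMod m) := A.image (· + 1)

lemma sh_iterate (m : ℕ) (A : Finset (ZMod m)) (n : ℕ) :
    (sh m)^[n] A = A.image (· + (n : ZMod m)) := by
  induction n with
  | zero => simp
  | succ n ih =>
      rw [Function.iterate_succ_apply', ih, sh, Finset.image_image]
      congr 1
      funext x
      push_cast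
      simp [Function.comp, add_assoc]

lemma card_sh (m : ℕ) (A : Finset (ZMod m)) : (sh m A).card = A.card :=
  Finset.card_image_of_injective _ (add_left_injective 1)

lemma sum_sh (m : ℕ) (A : Finset (ZMod m)) :
    ∑ x ∈ sh m A, x = (∑ x ∈ A, x) + A.card := by
  rw [sh, Finset.sum_image (by intro x _ y _ h; simpa using h)]
  rw [Finset.sum_add_distrib, Finset.sum_const, nsmul_eq_mul, mul_one]

lemma card_sh_iterate (m : ℕ) (A : Finset (ZMod m)) (n : ℕ) :
    ((sh m)^[n] A).card = A.card := by
  induction n with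
  | zero => rfl
  | succ n ih => rw [Function.iterate_succ_apply', card_sh, ih]

lemma sum_sh_iterate (m : ℕ) (A : Finset (ZMod m)) (n : ℕ) :
    ∑ x ∈ (sh m)^[n] A, x = (∑ x ∈ A, x) + (n : ZMod m) * A.card := by
  induction n with
  | zero => simp
  | succ n ih =>
      rw [Function.iterate_succ_apply', sum_sh, ih, card_sh_iterate]
      push_cast
      ring

/-- For a `t`-element subset `A` of `ZMod k`, the least period `r` of `A` under the
shift map satisfies `r ∣ k` and `k ∣ t * r`; in particular `k / gcd(k,t) ∣ r`. -/
theorem minimalPeriod_dvd (k t : ℕ) [NeZero k] (ht : 0 < t) (htk : t ≤ k)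
    (A : Finset (ZMod k)) (hA : A.card = t) :
    Function.minimalPeriod (sh k) A ∣ k ∧
    k ∣ t * Function.minimalPeriod (sh k) A ∧
    k / Nat.gcd k t ∣ Function.minimalPeriod (sh k) A := by
  set r := Function.minimalPeriod (sh k) A with hr
  have hper : Function.IsPeriodicPt (sh k) k A := by
    show (sh k)^[k] A = A
    rw [sh_iterate, ZMod.natCast_self]
    simp
  have h1 : r ∣ k := hper.minimalPeriod_dvd
  have hiter : (sh k)^[r] A = A := Function.iterate_minimalPeriod
  have hsum : (∑ x ∈ A, x) + (r : ZMod k) * A.card = ∑ x ∈ A, x := by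
    rw [← sum_sh_iterate, hiter]
  have hz : ((r * t : ℕ) : ZMod k) = 0 := by
    have h0 : (r : ZMod k) * A.card = 0 := by
      have h := hsum
      nth_rewrite 2 [← add_zero (∑ x ∈ A, x)] at h
      exact add_left_cancel h
    rw [hA] at h0
    push_cast
    exact h0
  have h2 : k ∣ t * r := by
    have := (ZMod.natCast_eq_zero_iff _ _).mp hz
    rwa [mul_comm] at this
  refine ⟨h1, h2, ?_⟩
  set g := Nat.gcd k t with hg
  have hg0 : 0 < g := Nat.gcd_pos_of_pos_left _ (Nat.pos_of_ne_zero (NeZero.ne k))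
  obtain ⟨c, hc⟩ := h2
  have hdvd : k / g ∣ (t / g) * r := by
    refine ⟨c, ?_⟩
    have hgk : g ∣ k := Nat.gcd_dvd_left _ _
    have hgt : g ∣ t := Nat.gcd_dvd_right _ _
    apply Nat.eq_of_mul_eq_mul_left hg0
    calc g * (t / g * r) = (g * (t / g)) * r := by ring
      _ = t * r := by rw [Nat.mul_div_cancel' hgt]
      _ = k * c := hc
      _ = g * (k / g * c) := by rw [← mul_assoc, Nat.mul_div_cancel' hgk]
  have hcop : (k / g).Coprime (t / g) := Nat.coprime_div_gcd_div_gcd hg0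
  exact hcop.dvd_of_dvd_mul_left hdvd
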